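/- Let A and A' be two top-down complete TDSTAs (or two bottom-up complete BDSTAs) over the same alphabet Σ. Then A ≡ A' if and only if L(Â) = L(Â'), where Â and Â' are the recognizers over Σ ∪ Σ̂ associated with A and A'. -/

import Mathlib

/-- Binary trees over an alphabet `σ`: `leaf` is the leaf symbol `#`. -/
inductive BTree (σ : Type) : Type where
  | leaf : BTree σ
  | node : σ → BTree σ → BTree σ → BTree σ

namespace BTree

/-- `mem π t` : the node `π` (a sequence over `{1,2}`, here `Bool` with
`false` = first child, `true` = second child) belongs to `dom t`. -/
def mem {σ : Type} : List Bool → BTree σ → Prop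
  | [], _ => True
  | _ :: _, .leaf => False
  | false :: π, .node _ t1 _ => mem π t1
  | true :: π, .node _ _ t2 => mem π t2

/-- The label of `t` at node `π`: `some l` if `t(π) = l ∈ σ`,
and `none` if `t(π) = #` or `π ∉ dom t`. -/
def labelAt {σ : Type} : BTree σ → List Bool → Option σ
  | .leaf, _ => none
  | .node l _ _, [] => some l
  | .node _ t1 _, false :: π => labelAt t1 π
  | .node _ _ t2, true :: π => labelAt t2 π

end BTree

/-- A selecting tree automaton (STA) over alphabet `σ` with states `Q`:
top states, bottom states, selecting configurations and transitions
`(q, L, q₁, q₂)` with `L ⊆ σ`. -/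
structure STA (σ Q : Type) where
  top : Set Q
  bot : Set Q
  sel : Set (Q × σ)
  delta : Set (Q × Set σ × Q × Q)

namespace STA

variable {σ Q : Type}

/-- Destination states: `δ(q,l) = {(q',q'') | ∃ L, l ∈ L ∧ (q,L,q',q'') ∈ δ}`. -/
def dst (A : STA σ Q) (q : Q) (l : σ) : Set (Q × Q) :=
  {p | ∃ L, l ∈ L ∧ (q, L, p.1, p.2) ∈ A.delta}

/-- Source states: `δ(q₁,q₂,l) = {q | ∃ L, l ∈ L ∧ (q,L,q₁,q₂) ∈ δ}`. -/
def src (A : STA σ Q) (q1 q2 : Q) (l : σ) : Set Q :=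
  {q | ∃ L, l ∈ L ∧ (q, L, q1, q2) ∈ A.delta}

/-- `R` is a run of `A` over `t`. -/
def IsRun (A : STA σ Q) (t : BTree σ) (R : List Bool → Q) : Prop :=
  ∀ π l, t.labelAt π = some l →
    R π ∈ A.src (R (π ++ [false])) (R (π ++ [true])) l

/-- `R` is an accepting run of `A` over `t`. -/
def Accepting (A : STA σ Q) (t : BTree σ) (R : List Bool → Q) : Prop :=
  A.IsRun t R ∧ R [] ∈ A.top ∧
    ∀ π, BTree.mem π t → t.labelAt π = none → R π ∈ A.bot

/-- The language of `A`. -/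
def lang (A : STA σ Q) : Set (BTree σ) := {t | ∃ R, A.Accepting t R}

/-- The set of nodes of `t` selected by `A`. -/
def selected (A : STA σ Q) (t : BTree σ) : Set (List Bool) :=
  {π | ∃ R l, A.Accepting t R ∧ t.labelAt π = some l ∧ (R π, l) ∈ A.sel}

/-- `A` is top-down deterministic. -/
def TDDet (A : STA σ Q) : Prop :=
  (∃ q, A.top = {q}) ∧ ∀ q l, ∃ p, A.dst q l = {p}

/-- `A` is bottom-up deterministic. -/
def BUDet (A : STA σ Q) : Prop :=
  (∃ q, A.bot = {q}) ∧ ∀ q1 q2 l, ∃ q, A.src q1 q2 l = {q}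

/-- `A` is top-down complete. -/
def TDComplete (A : STA σ Q) : Prop := ∀ q l, (A.dst q l).Nonempty

/-- `A` is bottom-up complete. -/
def BUComplete (A : STA σ Q) : Prop := ∀ q1 q2 l, (A.src q1 q2 l).Nonempty

/-- One-step reachability between states. -/
def step (A : STA σ Q) (p p' : Q) : Prop :=
  ∃ L q1 q2, (p, L, q1, q2) ∈ A.delta ∧ (p' = q1 ∨ p' = q2)

/-- Reachability between states. -/
def reach (A : STA σ Q) : Q → Q → Prop := Relation.ReflTransGen A.step

/-- `A[q]` : the restriction of `A` to the state `q`
(top states become `{q}` and everything is restricted to states reachable from `q`). -/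
def restrict (A : STA σ Q) (q : Q) : STA σ Q where
  top := {q}
  bot := {p | p ∈ A.bot ∧ A.reach q p}
  sel := {ps | ps ∈ A.sel ∧ A.reach q ps.1}
  delta := {tr | tr ∈ A.delta ∧ A.reach q tr.1}

/-- A state is non-changing if `δ(q,l) = {(q,q)}` for every label. -/
def NonChanging (A : STA σ Q) (q : Q) : Prop := ∀ l, A.dst q l = {(q, q)}

/-- Top-down universal state. -/
def TDUniversal (A : STA σ Q) (q : Q) : Prop := A.NonChanging q ∧ q ∈ A.bot

/-- Top-down sink state. -/
def TDSink (A : STA σ Q) (q : Q) : Prop := A.NonChanging q ∧ q ∉ A.bot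

end STA

/-- Equivalence of STAs: same language and same selected nodes on every tree. -/
def STAEquiv {σ Q Q' : Type} (A : STA σ Q) (B : STA σ Q') : Prop :=
  A.lang = B.lang ∧ ∀ t, A.selected t = B.selected t

/-- `A` is a minimal top-down complete TDSTA: no equivalent top-down complete
TDSTA has strictly fewer states. -/
def MinimalTD {σ Q : Type} (A : STA σ Q) : Prop :=
  A.TDDet ∧ A.TDComplete ∧
    ∀ (Q' : Type) [Finite Q'], ∀ B : STA σ Q',
      B.TDDet → B.TDComplete → STAEquiv B A → Nat.card Q ≤ Nat.card Q'

/-- `A` is a minimal bottom-up complete BDSTA. -/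
def MinimalBU {σ Q : Type} (A : STA σ Q) : Prop :=
  A.BUDet ∧ A.BUComplete ∧
    ∀ (Q' : Type) [Finite Q'], ∀ B : STA σ Q',
      B.BUDet → B.BUComplete → STAEquiv B A → Nat.card Q ≤ Nat.card Q'

/-- `B` behaves like `A_⊤`: it accepts every tree and selects no node. -/
def IsTopSTA {σ Q : Type} (B : STA σ Q) : Prop :=
  B.lang = Set.univ ∧ ∀ t, B.selected t = ∅

namespace STA

variable {σ Q : Type}

/-- The transitions of the recognizer `Â` obtained by splitting each transition
`(q,L,q₁,q₂)` of `A` into its non-selecting part (labels kept in `Σ`,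
i.e. `Sum.inl`) and its selecting part (labels hatted into `Σ̂`, i.e. `Sum.inr`),
omitting empty label sets. -/
def hatBase (A : STA σ Q) :
    Set ((Q ⊕ Unit) × Set (σ ⊕ σ) × (Q ⊕ Unit) × (Q ⊕ Unit)) :=
  {tr | ∃ q L q1 q2, (q, L, q1, q2) ∈ A.delta ∧
    ((tr = (Sum.inl q, {x | ∃ l ∈ L, (q, l) ∉ A.sel ∧ x = Sum.inl l},
            Sum.inl q1, Sum.inl q2) ∧ ∃ l ∈ L, (q, l) ∉ A.sel) ∨
     (tr = (Sum.inl q, {x | ∃ l ∈ L, (q, l) ∈ A.sel ∧ x = Sum.inr l},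
            Sum.inl q1, Sum.inl q2) ∧ ∃ l ∈ L, (q, l) ∈ A.sel))}

/-- `L(q)` : the labels for which the state `q` has no transition so far. -/
def hatMissing (A : STA σ Q) (q : Q ⊕ Unit) : Set (σ ⊕ σ) :=
  {x | ¬ ∃ L q1 q2, x ∈ L ∧ (q, L, q1, q2) ∈ A.hatBase}

/-- The recognizer `Â` over `Σ ∪ Σ̂` associated with `A`
(`Sum.inl l` encodes `l ∈ Σ`, `Sum.inr l` encodes `l̂ ∈ Σ̂`;
the fresh sink state `q⊥` is `Sum.inr ()`). -/
def hat (A : STA σ Q) : STA (σ ⊕ σ) (Q ⊕ Unit) where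
  top := Sum.inl '' A.top
  bot := Sum.inl '' A.bot
  sel := ∅
  delta := A.hatBase ∪
    {tr | ∃ q : Q ⊕ Unit, (A.hatMissing q).Nonempty ∧
      tr = (q, A.hatMissing q, Sum.inr (), Sum.inr ())} ∪
    {(Sum.inr (), (Set.univ : Set (σ ⊕ σ)), Sum.inr (), Sum.inr ())}

end STA

/-- Root relabeling of a tree. -/
def relabelRoot {σ : Type} (t : BTree σ) (l : σ) : BTree σ :=
  match t with
  | .leaf => .leaf
  | .node _ t1 t2 => .node l t1 t2

/-- A recognizer `B` over `Σ ∪ Σ̂` is selecting-unambiguous. -/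
def SelUnambiguous {σ Q : Type} (B : STA (σ ⊕ σ) Q) : Prop :=
  ∀ q : Q, ∀ t ∈ (B.restrict q).lang,
    (∀ s : σ, t.labelAt [] = some (Sum.inl s) →
      relabelRoot t (Sum.inr s) ∉ (B.restrict q).lang) ∧
    (∀ s : σ, t.labelAt [] = some (Sum.inr s) →
      relabelRoot t (Sum.inl s) ∉ (B.restrict q).lang)

/-! ### Auxiliary development for stmt5 -/

noncomputable section Stmt5Aux
open Classical

namespace BTree

variable {σ : Type}

theorem mem_nil {t : BTree σ} : mem [] t := by cases t <;> trivial

theorem labelAt_some_mem {t : BTree σ} {π : List Bool} {l : σ}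
    (h : t.labelAt π = some l) : mem π t := by
  induction π generalizing t with
  | nil => exact mem_nil
  | cons b π ih =>
    cases t with
    | leaf => simp [labelAt] at h
    | node l' t1 t2 => cases b <;> exact ih h

theorem mem_append_cons {t : BTree σ} {π : List Bool} {b : Bool} {ρ : List Bool}
    (h : mem (π ++ b :: ρ) t) : ∃ l, t.labelAt π = some l := by
  induction π generalizing t with
  | nil =>
    cases t with
    | leaf => cases b <;> exact absurd h (by simp [mem])
    | node l t1 t2 => exact ⟨l, rfl⟩
  | cons c π ih =>
    cases t with
    | leaf => cases c <;> exact absurd h (by simp [mem])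
    | node l t1 t2 => cases c <;> exact ih h

theorem mem_child {t : BTree σ} {π : List Bool} {l : σ} {b : Bool}
    (h : t.labelAt π = some l) : mem (π ++ [b]) t := by
  induction π generalizing t with
  | nil =>
    cases t with
    | leaf => simp [labelAt] at h
    | node l' t1 t2 => cases b <;> simp [mem]
  | cons c π ih =>
    cases t with
    | leaf => simp [labelAt] at h
    | node l' t1 t2 => cases c <;> exact ih h

/-- The subtree of `t` at node `π`. -/
def subtreeAt : BTree σ → List Bool → BTree σ
  | t, [] => t
  | .leaf, _ :: _ => .leaf
  | .node _ t1 _, false :: π => subtreeAt t1 π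
  | .node _ _ t2, true :: π => subtreeAt t2 π

theorem labelAt_append {t : BTree σ} {π : List Bool} (h : mem π t) (ρ : List Bool) :
    t.labelAt (π ++ ρ) = (subtreeAt t π).labelAt ρ := by
  induction π generalizing t with
  | nil => simp [subtreeAt]
  | cons b π ih =>
    cases t with
    | leaf => cases b <;> exact absurd h (by simp [mem])
    | node l t1 t2 => cases b <;> exact ih h

theorem mem_append {t : BTree σ} {π : List Bool} (h : mem π t) (ρ : List Bool) :
    mem (π ++ ρ) t ↔ mem ρ (subtreeAt t π) := by
  induction π generalizing t with
  | nil => simp [subtreeAt]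
  | cons b π ih =>
    cases t with
    | leaf => cases b <;> exact absurd h (by simp [mem])
    | node l t1 t2 => cases b <;> exact ih h

theorem subtreeAt_append {t : BTree σ} {π : List Bool} (h : mem π t) (ρ : List Bool) :
    subtreeAt t (π ++ ρ) = subtreeAt (subtreeAt t π) ρ := by
  induction π generalizing t with
  | nil => simp [subtreeAt]
  | cons b π ih =>
    cases t with
    | leaf => cases b <;> exact absurd h (by simp [mem])
    | node l t1 t2 => cases b <;> exact ih h

theorem exists_leaf (t : BTree σ) : ∃ ρ, mem ρ t ∧ t.labelAt ρ = none := by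
  induction t with
  | leaf => exact ⟨[], mem_nil, rfl⟩
  | node l t1 t2 ih1 ih2 =>
    obtain ⟨ρ, hm, hl⟩ := ih1
    exact ⟨false :: ρ, hm, hl⟩

theorem exists_leaf_below {t : BTree σ} {π : List Bool} (h : mem π t) :
    ∃ ρ, mem (π ++ ρ) t ∧ t.labelAt (π ++ ρ) = none := by
  obtain ⟨ρ, hm, hl⟩ := exists_leaf (subtreeAt t π)
  exact ⟨ρ, (mem_append h ρ).2 hm, (labelAt_append h ρ).trans hl⟩

/-- Projection of a tree over `Σ ∪ Σ̂` to a tree over `Σ`. -/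
def proj : BTree (σ ⊕ σ) → BTree σ
  | .leaf => .leaf
  | .node x t1 t2 => .node (Sum.elim id id x) (proj t1) (proj t2)

theorem mem_proj {t : BTree (σ ⊕ σ)} {π : List Bool} : mem π t.proj ↔ mem π t := by
  induction π generalizing t with
  | nil => simp [mem]
  | cons b π ih =>
    cases t with
    | leaf => cases b <;> simp [mem, proj]
    | node x t1 t2 => cases b <;> exact ih

theorem labelAt_proj (t : BTree (σ ⊕ σ)) (π : List Bool) :
    t.proj.labelAt π = Option.map (Sum.elim id id) (t.labelAt π) := by
  induction π generalizing t with
  | nil => cases t <;> rfl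
  | cons b π ih =>
    cases t with
    | leaf => rfl
    | node x t1 t2 => cases b <;> exact ih _

/-- Mark a tree `t` according to a run `R` and a selecting set `sel`:
node `π` with label `l` is relabeled `Sum.inr l` if `(R π, l) ∈ sel`,
and `Sum.inl l` otherwise.  `ρ` is the address of the root of `t`. -/
def mark {Q : Type} (sel : Set (Q × σ)) (R : List Bool → Q) :
    BTree σ → List Bool → BTree (σ ⊕ σ)
  | .leaf, _ => .leaf
  | .node l t1 t2, ρ =>
      .node (if (R ρ, l) ∈ sel then Sum.inr l else Sum.inl l)
        (mark sel R t1 (ρ ++ [false])) (mark sel R t2 (ρ ++ [true]))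

theorem proj_mark {Q : Type} (sel : Set (Q × σ)) (R : List Bool → Q)
    (t : BTree σ) (ρ : List Bool) : (mark sel R t ρ).proj = t := by
  induction t generalizing ρ with
  | leaf => rfl
  | node l t1 t2 ih1 ih2 =>
    simp only [mark, proj, ih1, ih2]
    split <;> simp

theorem labelAt_mark {Q : Type} (sel : Set (Q × σ)) (R : List Bool → Q)
    (t : BTree σ) (ρ π : List Bool) :
    (mark sel R t ρ).labelAt π =
      Option.map (fun l => if (R (ρ ++ π), l) ∈ sel then Sum.inr l else Sum.inl l)
        (t.labelAt π) := by
  induction t generalizing ρ π with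
  | leaf => rfl
  | node l t1 t2 ih1 ih2 =>
    cases π with
    | nil => simp [mark, labelAt]
    | cons b π =>
      cases b with
      | false =>
        simpa [mark, labelAt, List.append_assoc] using ih1 (ρ ++ [false]) π
      | true =>
        simpa [mark, labelAt, List.append_assoc] using ih2 (ρ ++ [true]) π

end BTree

namespace STA

variable {σ Q Q' : Type}

/-- Any two accepting runs agree on the domain of the tree. -/
def AccAgree (A : STA σ Q) : Prop :=
  ∀ t (R R' : List Bool → Q), A.Accepting t R → A.Accepting t R' →
    ∀ π, BTree.mem π t → R π = R' π

theorem tdDet_accAgree {A : STA σ Q} (hd : A.TDDet) : A.AccAgree := by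
  rintro t R R' ⟨hR, hRt, hRb⟩ ⟨hR', hR't, hR'b⟩ π
  induction π using List.reverseRecOn with
  | nil =>
    intro _
    obtain ⟨q, hq⟩ := hd.1
    rw [hq] at hRt hR't
    rw [hRt, hR't]
  | append_singleton π b ih =>
    intro hm
    obtain ⟨l, hl⟩ := BTree.mem_append_cons (b := b) (ρ := []) hm
    have hπ : R π = R' π := ih (BTree.labelAt_some_mem hl)
    obtain ⟨p, hp⟩ := hd.2 (R π) l
    have h1 : (R (π ++ [false]), R (π ++ [true])) ∈ A.dst (R π) l := by
      obtain ⟨L, hL, hδ⟩ := hR π l hl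
      exact ⟨L, hL, hδ⟩
    have h2 : (R' (π ++ [false]), R' (π ++ [true])) ∈ A.dst (R π) l := by
      obtain ⟨L, hL, hδ⟩ := hR' π l hl
      rw [hπ]
      exact ⟨L, hL, hδ⟩
    rw [hp] at h1 h2
    have := h1.trans h2.symm
    cases b
    · exact congrArg Prod.fst this
    · exact congrArg Prod.snd this

theorem buDet_accAgree {A : STA σ Q} (hd : A.BUDet) : A.AccAgree := by
  rintro t R R' ⟨hR, hRt, hRb⟩ ⟨hR', hR't, hR'b⟩ π hm
  obtain ⟨b0, hb0⟩ := hd.1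
  suffices H : ∀ (s : BTree σ) (π : List Bool), BTree.mem π t →
      BTree.subtreeAt t π = s → R π = R' π from H _ π hm rfl
  intro s
  induction s with
  | leaf =>
    intro π hm hs
    have hnone : t.labelAt π = none := by
      have := BTree.labelAt_append hm ([] : List Bool)
      rw [hs] at this
      simpa [BTree.labelAt] using this
    have h1 := hRb π hm hnone
    have h2 := hR'b π hm hnone
    rw [hb0] at h1 h2
    rw [h1, h2]
  | node l s1 s2 ih1 ih2 =>
    intro π hm hs
    have hlab : t.labelAt π = some l := by
      have := BTree.labelAt_append hm ([] : List Bool)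
      rw [hs] at this
      simpa [BTree.labelAt] using this
    have hm1 : BTree.mem (π ++ [false]) t := BTree.mem_child hlab
    have hm2 : BTree.mem (π ++ [true]) t := BTree.mem_child hlab
    have hs1 : BTree.subtreeAt t (π ++ [false]) = s1 := by
      rw [BTree.subtreeAt_append hm, hs]; simp [BTree.subtreeAt]
    have hs2 : BTree.subtreeAt t (π ++ [true]) = s2 := by
      rw [BTree.subtreeAt_append hm, hs]; simp [BTree.subtreeAt]
    have e1 : R (π ++ [false]) = R' (π ++ [false]) := ih1 _ hm1 hs1
    have e2 : R (π ++ [true]) = R' (π ++ [true]) := ih2 _ hm2 hs2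
    obtain ⟨q, hq⟩ := hd.2 (R (π ++ [false])) (R (π ++ [true])) l
    have h1 : R π ∈ A.src (R (π ++ [false])) (R (π ++ [true])) l := hR π l hlab
    have h2 : R' π ∈ A.src (R (π ++ [false])) (R (π ++ [true])) l := by
      rw [e1, e2]; exact hR' π l hlab
    rw [hq] at h1 h2
    rw [h1, h2]

/-- In an accepting run of `Â`, the sink state never occurs on the domain. -/
theorem hat_run_ne_inr {A : STA σ Q} {t' : BTree (σ ⊕ σ)} {R : List Bool → Q ⊕ Unit}
    (hacc : A.hat.Accepting t' R) :
    ∀ π, BTree.mem π t' → R π ≠ Sum.inr () := by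
  obtain ⟨hrun, htop, hbot⟩ := hacc
  have spread : ∀ (ρ π : List Bool), R π = Sum.inr () → BTree.mem (π ++ ρ) t' →
      R (π ++ ρ) = Sum.inr () := by
    intro ρ
    induction ρ with
    | nil => intro π h _; simpa using h
    | cons b ρ ih =>
      intro π hπ hm
      obtain ⟨x, hx⟩ := BTree.mem_append_cons hm
      obtain ⟨L', hL', htr⟩ := hrun π x hx
      have hchild : ∀ c : Bool, R (π ++ [c]) = Sum.inr () := by
        rcases htr with (hb | hmis) | hloop
        · obtain ⟨q, L, q1, q2, hδ, hor⟩ := hb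
          rcases hor with ⟨heq, -⟩ | ⟨heq, -⟩ <;>
            · have := congrArg Prod.fst heq
              simp only at this
              rw [hπ] at this
              exact absurd this (by simp)
        · obtain ⟨q', hne, heq⟩ := hmis
          have h3 := congrArg (fun p => p.2.2.1) heq
          have h4 := congrArg (fun p => p.2.2.2) heq
          simp only at h3 h4
          intro c; cases c
          · exact h3
          · exact h4
        · simp only [Set.mem_singleton_iff, Prod.mk.injEq] at hloop
          intro c; cases c
          · exact hloop.2.2.1
          · exact hloop.2.2.2
      have : R ((π ++ [b]) ++ ρ) = Sum.inr () := by
        apply ih (π ++ [b]) (hchild b)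
        simpa [List.append_assoc] using hm
      simpa [List.append_assoc] using this
  intro π hm hπ
  obtain ⟨ρ, hmρ, hlρ⟩ := BTree.exists_leaf_below hm
  have h1 : R (π ++ ρ) = Sum.inr () := spread ρ π hπ hmρ
  have h2 := hbot (π ++ ρ) hmρ hlρ
  rw [h1] at h2
  obtain ⟨b, -, hb⟩ := h2
  exact Sum.inl_ne_inr hb

/-- Decoding of a transition of `Â` used at an inner node of the domain. -/
theorem hat_step_decode {A : STA σ Q} {t' : BTree (σ ⊕ σ)} {R : List Bool → Q ⊕ Unit}
    (hacc : A.hat.Accepting t' R) {π : List Bool} {x : σ ⊕ σ}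
    (hx : t'.labelAt π = some x) :
    ∃ q q1 q2 L, R π = Sum.inl q ∧ R (π ++ [false]) = Sum.inl q1 ∧
      R (π ++ [true]) = Sum.inl q2 ∧ (q, L, q1, q2) ∈ A.delta ∧
      ((∃ l, x = Sum.inl l ∧ l ∈ L ∧ (q, l) ∉ A.sel) ∨
       (∃ l, x = Sum.inr l ∧ l ∈ L ∧ (q, l) ∈ A.sel)) := by
  obtain ⟨L', hL', htr⟩ := hacc.1 π x hx
  rcases htr with (hb | hmis) | hloop
  · obtain ⟨q, L, q1, q2, hδ, hor⟩ := hb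
    rcases hor with ⟨heq, -⟩ | ⟨heq, -⟩ <;>
    · obtain ⟨h1, h2, h3, h4⟩ : R π = Sum.inl q ∧ L' = _ ∧
          R (π ++ [false]) = Sum.inl q1 ∧ R (π ++ [true]) = Sum.inl q2 := by
        have e1 := congrArg Prod.fst heq
        have e2 := congrArg (fun p => p.2.1) heq
        have e3 := congrArg (fun p => p.2.2.1) heq
        have e4 := congrArg (fun p => p.2.2.2) heq
        exact ⟨e1, e2, e3, e4⟩
      subst h2
      obtain ⟨l, hlL, hs, hxe⟩ := hL'
      first
      | exact ⟨q, q1, q2, L, h1, h3, h4, hδ, Or.inl ⟨l, hxe, hlL, hs⟩⟩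
      | exact ⟨q, q1, q2, L, h1, h3, h4, hδ, Or.inr ⟨l, hxe, hlL, hs⟩⟩
  · obtain ⟨q', hne, heq⟩ := hmis
    have h3 := congrArg (fun p => p.2.2.1) heq
    simp only at h3
    exact absurd h3 (hat_run_ne_inr hacc _ (BTree.mem_child hx))
  · simp only [Set.mem_singleton_iff, Prod.mk.injEq] at hloop
    exact absurd hloop.1 (hat_run_ne_inr hacc _ (BTree.labelAt_some_mem hx))

/-- Characterization of membership in the language of the recognizer `Â`. -/
theorem mem_hat_lang_iff (A : STA σ Q) (t' : BTree (σ ⊕ σ)) :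
    t' ∈ A.hat.lang ↔ ∃ R₀ : List Bool → Q, A.Accepting t'.proj R₀ ∧
      ∀ π l, (t'.labelAt π = some (Sum.inl l) → (R₀ π, l) ∉ A.sel) ∧
             (t'.labelAt π = some (Sum.inr l) → (R₀ π, l) ∈ A.sel) := by
  constructor
  · rintro ⟨R, hacc⟩
    obtain ⟨q₀, hq₀, hR0⟩ := hacc.2.1
    refine ⟨fun π => Sum.elim id (fun _ => q₀) (R π), ⟨?_, ?_, ?_⟩, ?_⟩
    · intro π l hl
      rw [BTree.labelAt_proj, Option.map_eq_some_iff] at hl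
      obtain ⟨x, hx, hxl⟩ := hl
      obtain ⟨q, q1, q2, L, h1, h2, h3, hδ, hor⟩ := hat_step_decode hacc hx
      simp only [h1, h2, h3]
      rcases hor with ⟨l', hxe, hlL, -⟩ | ⟨l', hxe, hlL, -⟩ <;>
      · subst hxe
        simp only [Sum.elim_inl, Sum.elim_inr, id] at hxl ⊢
        subst hxl
        exact ⟨L, hlL, hδ⟩
    · show Sum.elim id (fun _ => q₀) (R []) ∈ A.top
      rw [← hR0]; simpa using hq₀
    · intro π hm hnone
      rw [BTree.labelAt_proj, Option.map_eq_none_iff] at hnone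
      obtain ⟨b, hb, hbe⟩ := hacc.2.2 π (BTree.mem_proj.1 hm) hnone
      show Sum.elim id (fun _ => q₀) (R π) ∈ A.bot
      rw [← hbe]; simpa using hb
    · intro π l
      constructor
      · intro hx
        obtain ⟨q, q1, q2, L, h1, -, -, -, hor⟩ := hat_step_decode hacc hx
        simp only [h1]
        rcases hor with ⟨l', hxe, -, hs⟩ | ⟨l', hxe, -, -⟩
        · obtain rfl : l' = l := by simpa using hxe.symm
          simpa using hs
        · exact absurd hxe (by simp)
      · intro hx
        obtain ⟨q, q1, q2, L, h1, -, -, -, hor⟩ := hat_step_decode hacc hx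
        simp only [h1]
        rcases hor with ⟨l', hxe, -, -⟩ | ⟨l', hxe, -, hs⟩
        · exact absurd hxe (by simp)
        · obtain rfl : l' = l := by simpa using hxe.symm
          simpa using hs
  · rintro ⟨R₀, ⟨hrun, htop, hbot⟩, hmark⟩
    refine ⟨fun π => Sum.inl (R₀ π), ?_, ⟨R₀ [], htop, rfl⟩, ?_⟩
    · intro π x hx
      have hl : t'.proj.labelAt π = some (Sum.elim id id x) := by
        rw [BTree.labelAt_proj, hx]; rfl
      obtain ⟨L, hlL, hδ⟩ := hrun π (Sum.elim id id x) hl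
      cases x with
      | inl l =>
        simp only [Sum.elim_inl, id] at hlL hδ
        refine ⟨{y | ∃ l' ∈ L, (R₀ π, l') ∉ A.sel ∧ y = Sum.inl l'},
          ⟨l, hlL, (hmark π l).1 hx, rfl⟩, Or.inl (Or.inl ?_)⟩
        exact ⟨R₀ π, L, R₀ (π ++ [false]), R₀ (π ++ [true]), hδ,
          Or.inl ⟨rfl, l, hlL, (hmark π l).1 hx⟩⟩
      | inr l =>
        simp only [Sum.elim_inr, id] at hlL hδ
        refine ⟨{y | ∃ l' ∈ L, (R₀ π, l') ∈ A.sel ∧ y = Sum.inr l'},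
          ⟨l, hlL, (hmark π l).2 hx, rfl⟩, Or.inl (Or.inl ?_)⟩
        exact ⟨R₀ π, L, R₀ (π ++ [false]), R₀ (π ++ [true]), hδ,
          Or.inr ⟨rfl, l, hlL, (hmark π l).2 hx⟩⟩
    · intro π hm hnone
      have hnone' : t'.proj.labelAt π = none := by
        rw [BTree.labelAt_proj, hnone]; rfl
      exact ⟨R₀ π, hbot π (BTree.mem_proj.2 hm) hnone', rfl⟩

theorem hat_lang_subset {A : STA σ Q} {A' : STA σ Q'}
    (hA : A.AccAgree) (hA' : A'.AccAgree) (heq : STAEquiv A A') :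
    A.hat.lang ⊆ A'.hat.lang := by
  intro t' ht'
  obtain ⟨R₀, hacc, hmark⟩ := (A.mem_hat_lang_iff t').1 ht'
  have hlangeq : t'.proj ∈ A'.lang := heq.1 ▸ ⟨R₀, hacc⟩
  obtain ⟨R₀', hacc'⟩ := hlangeq
  refine (A'.mem_hat_lang_iff t').2 ⟨R₀', hacc', fun π l => ⟨?_, ?_⟩⟩
  · intro hx hs
    have hlab : t'.proj.labelAt π = some l := by
      rw [BTree.labelAt_proj, hx]; rfl
    have hsel : π ∈ A.selected t'.proj := by
      rw [heq.2]
      exact ⟨R₀', l, hacc', hlab, hs⟩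
    obtain ⟨R'', l'', hacc'', hlab'', hs''⟩ := hsel
    have hle : l'' = l := by rw [hlab] at hlab''; exact (Option.some.inj hlab'').symm
    have hRe := hA _ R'' R₀ hacc'' hacc π (BTree.labelAt_some_mem hlab)
    rw [hRe, hle] at hs''
    exact (hmark π l).1 hx hs''
  · intro hx
    have hlab : t'.proj.labelAt π = some l := by
      rw [BTree.labelAt_proj, hx]; rfl
    have hsel : π ∈ A'.selected t'.proj := by
      rw [← heq.2]
      exact ⟨R₀, l, hacc, hlab, (hmark π l).2 hx⟩
    obtain ⟨R'', l'', hacc'', hlab'', hs''⟩ := hsel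
    have hle : l'' = l := by rw [hlab] at hlab''; exact (Option.some.inj hlab'').symm
    have hRe := hA' _ R'' R₀' hacc'' hacc' π (BTree.labelAt_some_mem hlab)
    rw [hRe, hle] at hs''
    exact hs''

theorem mark_mem_hat {A : STA σ Q} {t : BTree σ} {R : List Bool → Q}
    (hacc : A.Accepting t R) : BTree.mark A.sel R t [] ∈ A.hat.lang := by
  refine (A.mem_hat_lang_iff _).2 ⟨R, ?_, fun π l => ⟨?_, ?_⟩⟩
  · rw [BTree.proj_mark]; exact hacc
  · intro hx
    rw [BTree.labelAt_mark, Option.map_eq_some_iff] at hx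
    obtain ⟨l0, hl0, hfe⟩ := hx
    simp only [List.nil_append] at hfe
    split at hfe
    · exact absurd hfe (by simp)
    · obtain rfl : l0 = l := by simpa using hfe
      assumption
  · intro hx
    rw [BTree.labelAt_mark, Option.map_eq_some_iff] at hx
    obtain ⟨l0, hl0, hfe⟩ := hx
    simp only [List.nil_append] at hfe
    split at hfe
    · obtain rfl : l0 = l := by simpa using hfe
      assumption
    · exact absurd hfe (by simp)

theorem lang_sub_of_hat {A : STA σ Q} {A' : STA σ Q'}
    (hsub : A.hat.lang ⊆ A'.hat.lang) : A.lang ⊆ A'.lang := by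
  rintro t ⟨R, hacc⟩
  have h1 := hsub (mark_mem_hat hacc)
  obtain ⟨R₀', hacc', -⟩ := (A'.mem_hat_lang_iff _).1 h1
  rw [BTree.proj_mark] at hacc'
  exact ⟨R₀', hacc'⟩

theorem sel_sub_of_hat {A : STA σ Q} {A' : STA σ Q'}
    (hsub : A.hat.lang ⊆ A'.hat.lang) (t : BTree σ) :
    A.selected t ⊆ A'.selected t := by
  rintro π ⟨R, l, hacc, hlab, hs⟩
  have h1 := hsub (mark_mem_hat hacc)
  obtain ⟨R₀', hacc', hmark'⟩ := (A'.mem_hat_lang_iff _).1 h1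
  rw [BTree.proj_mark] at hacc'
  have hx : (BTree.mark A.sel R t []).labelAt π = some (Sum.inr l) := by
    rw [BTree.labelAt_mark, hlab]
    simp [hs]
  exact ⟨R₀', l, hacc', hlab, (hmark' π l).2 hx⟩

theorem STAEquiv.symm' {A : STA σ Q} {A' : STA σ Q'}
    (h : STAEquiv A A') : STAEquiv A' A :=
  ⟨h.1.symm, fun t => (h.2 t).symm⟩

end STA

end Stmt5Aux

/-- two top-down complete TDSTAs (or two bottom-up complete
BDSTAs) are equivalent iff their associated recognizers have the same
language. -/
theorem stmt5 {σ Q Q' : Type} [Finite σ] [Finite Q] [Finite Q']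
    (A : STA σ Q) (A' : STA σ Q')
    (h : (A.TDDet ∧ A.TDComplete ∧ A'.TDDet ∧ A'.TDComplete) ∨
         (A.BUDet ∧ A.BUComplete ∧ A'.BUDet ∧ A'.BUComplete)) :
    STAEquiv A A' ↔ A.hat.lang = A'.hat.lang := by
  have hA : A.AccAgree := by
    rcases h with ⟨hd, -, -, -⟩ | ⟨hd, -, -, -⟩
    · exact STA.tdDet_accAgree hd
    · exact STA.buDet_accAgree hd
  have hA' : A'.AccAgree := by
    rcases h with ⟨-, -, hd, -⟩ | ⟨-, -, hd, -⟩
    · exact STA.tdDet_accAgree hd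
    · exact STA.buDet_accAgree hd
  constructor
  · intro heq
    exact Set.Subset.antisymm (STA.hat_lang_subset hA hA' heq)
      (STA.hat_lang_subset hA' hA (STA.STAEquiv.symm' heq))
  · intro heq
    refine ⟨Set.Subset.antisymm (STA.lang_sub_of_hat heq.le)
      (STA.lang_sub_of_hat heq.ge), fun t => Set.Subset.antisymm
      (STA.sel_sub_of_hat heq.le t) (STA.sel_sub_of_hat heq.ge t)⟩
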